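/- Let p be an odd prime. Then for all integers n ≥ 0 and k ≥ 0, b(2·p^{2k+2}·n + (p^{2k+2} − 1)/2) ≡ (−1)^{(k+1)(p−1)/2} · p^{k+1} · b(2n) (mod 4). (Since p is odd this is equivalent to the relation b(2n) ≡ (−1)^{(k+1)(1−p)/2} p^{−k−1} b(2p^{2k+2}n + (p^{2k+2}−1)/2) (mod 4), where p^{−1} denotes the inverse of p modulo 4.) -/

import Mathlib

open PowerSeries Finset

/-- The `n`-th summand `q^n (−q;q²)_n / (q;q²)_{n+1}` of the second order mock theta
function `B(q)`, as a formal power series over `ℤ`.  The denominator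
`(q;q²)_{n+1} = ∏_{j=0}^{n} (1 - q^{2j+1})` has constant coefficient `1`, hence is
invertible; we use `PowerSeries.invOfUnit`. -/
noncomputable def mockBterm (n : ℕ) : PowerSeries ℤ :=
  (X : PowerSeries ℤ) ^ n
    * (∏ j ∈ range n, (1 + (X : PowerSeries ℤ) ^ (2 * j + 1)))
    * PowerSeries.invOfUnit (∏ j ∈ range (n + 1), (1 - (X : PowerSeries ℤ) ^ (2 * j + 1))) 1

/-- `B(q) = Σ_{n≥0} q^n (−q;q²)_n/(q;q²)_{n+1}`.  The `n`-th summand is divisible by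
`q^n`, so the `N`-th coefficient of `B(q)` only receives contributions from the
summands with `n ≤ N`; this defines the (formal) infinite sum coefficientwise. -/
noncomputable def mockB : PowerSeries ℤ :=
  PowerSeries.mk fun N => ∑ n ∈ range (N + 1), PowerSeries.coeff (R := ℤ) N (mockBterm n)

/-- `b n` is the coefficient of `q^n` in `B(q)`. -/
noncomputable def b (n : ℕ) : ℤ := PowerSeries.coeff (R := ℤ) n mockB

noncomputable def G (m : ℕ) : PowerSeries (ZMod 4) := PowerSeries.mk fun i => if m ∣ i then 1 else 0

lemma two_mul_two : (2 : PowerSeries (ZMod 4)) * 2 = 0 := by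
  rw [← map_ofNat (C (R := ZMod 4)) 2, ← map_mul]
  have : (2 * 2 : ZMod 4) = 0 := by decide
  rw [this, map_zero]

lemma one_sub_X_pow_mul_G {m : ℕ} (hm : 0 < m) :
    ((1 : PowerSeries (ZMod 4)) - X ^ m) * G m = 1 := by
  ext N
  rw [sub_mul, one_mul, map_sub, mul_comm, PowerSeries.coeff_mul_X_pow']
  simp only [G, coeff_mk, coeff_one]
  rcases Nat.eq_zero_or_pos N with h0 | h0
  · subst h0
    rw [if_neg (by omega : ¬ m ≤ 0), if_pos (dvd_zero m), if_pos rfl]; ring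
  · rw [if_neg (by omega : ¬ N = 0)]
    by_cases hle : m ≤ N
    · have hiff : m ∣ N ↔ m ∣ N - m := by
        constructor
        · intro h; exact (Nat.dvd_sub h dvd_rfl)
        · intro h; have := Nat.dvd_add h (dvd_refl m); rwa [Nat.sub_add_cancel hle] at this
      rw [if_pos hle]
      by_cases hd : m ∣ N
      · rw [if_pos hd, if_pos (hiff.mp hd)]; ring
      · rw [if_neg hd, if_neg (fun h => hd (hiff.mpr h))]; ring
    · have hnd : ¬ m ∣ N := fun h => hle (Nat.le_of_dvd h0 h)
      rw [if_neg hle, if_neg hnd]; ring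

lemma prod_one_add_two_mul (n : ℕ) (a : ℕ → PowerSeries (ZMod 4)) :
    ∏ j ∈ range n, (1 + 2 * a j) = 1 + 2 * ∑ j ∈ range n, a j := by
  induction n with
  | zero => simp
  | succ n ih =>
      rw [prod_range_succ, ih, sum_range_succ]
      have h2 : (2 : PowerSeries (ZMod 4)) * 2 = 0 := two_mul_two
      calc (1 + 2 * ∑ j ∈ range n, a j) * (1 + 2 * a n)
          = 1 + 2 * (∑ j ∈ range n, a j + a n) + ((2:PowerSeries (ZMod 4)) * 2) * ((∑ j ∈ range n, a j) * a n) := by ring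
        _ = 1 + 2 * (∑ j ∈ range n, a j + a n) := by rw [h2]; ring

lemma factor_eq (j : ℕ) :
    (1 - (X : PowerSeries (ZMod 4)) ^ (2*j+1)) * (1 + 2 * (X ^ (2*j+1) * G (2*j+1))) = 1 + X ^ (2*j+1) := by
  have h := one_sub_X_pow_mul_G (m := 2*j+1) (by omega)
  calc (1 - (X : PowerSeries (ZMod 4)) ^ (2*j+1)) * (1 + 2 * (X ^ (2*j+1) * G (2*j+1)))
      = (1 - X ^ (2*j+1)) + 2 * X ^ (2*j+1) * ((1 - X ^ (2*j+1)) * G (2*j+1)) := by ring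
    _ = (1 - X ^ (2*j+1)) + 2 * X ^ (2*j+1) * 1 := by rw [h]
    _ = 1 + X ^ (2*j+1) := by ring

noncomputable def φ4 : PowerSeries ℤ →+* PowerSeries (ZMod 4) :=
  PowerSeries.map (Int.castRingHom (ZMod 4))

lemma map_mockBterm (n : ℕ) :
    φ4 (mockBterm n) = X ^ n * (G (2*n+1) * (1 + 2 * ∑ j ∈ range n, X ^ (2*j+1) * G (2*j+1))) := by
  set Dz : PowerSeries ℤ := ∏ j ∈ range (n + 1), (1 - (X : PowerSeries ℤ) ^ (2 * j + 1)) with hDz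
  have hc : constantCoeff Dz = ((1 : ℤˣ) : ℤ) := by
    rw [hDz, map_prod]
    rw [Finset.prod_eq_one]
    · rfl
    intro j _
    simp [zero_pow (by omega : 2*j+1 ≠ 0)]
  have hinv : Dz * PowerSeries.invOfUnit Dz 1 = 1 := PowerSeries.mul_invOfUnit Dz 1 hc
  have hmapinv : φ4 Dz * φ4 (PowerSeries.invOfUnit Dz 1) = 1 := by
    rw [← map_mul, hinv, map_one]
  have hmapD : φ4 Dz = ∏ j ∈ range (n+1), (1 - (X : PowerSeries (ZMod 4)) ^ (2*j+1)) := by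
    rw [hDz, map_prod]
    refine Finset.prod_congr rfl fun j _ => ?_
    rw [map_sub, map_one, map_pow, φ4]
    rw [PowerSeries.map_X]
  set V : PowerSeries (ZMod 4) := G (2*n+1) * (1 + 2 * ∑ j ∈ range n, X ^ (2*j+1) * G (2*j+1)) with hV
  have hP : (∏ j ∈ range n, (1 + (X : PowerSeries (ZMod 4)) ^ (2*j+1)))
      = (∏ j ∈ range n, (1 - (X : PowerSeries (ZMod 4)) ^ (2*j+1)))
        * (1 + 2 * ∑ j ∈ range n, X ^ (2*j+1) * G (2*j+1)) := by
    rw [← prod_one_add_two_mul n (fun j => X ^ (2*j+1) * G (2*j+1)), ← Finset.prod_mul_distrib]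
    exact Finset.prod_congr rfl fun j _ => (factor_eq j).symm
  have hDV : φ4 Dz * V = ∏ j ∈ range n, (1 + (X : PowerSeries (ZMod 4)) ^ (2*j+1)) := by
    rw [hmapD, Finset.prod_range_succ, hV]
    calc (∏ j ∈ range n, (1 - (X : PowerSeries (ZMod 4)) ^ (2*j+1))) * (1 - X ^ (2*n+1))
          * (G (2*n+1) * (1 + 2 * ∑ j ∈ range n, X ^ (2*j+1) * G (2*j+1)))
        = (∏ j ∈ range n, (1 - (X : PowerSeries (ZMod 4)) ^ (2*j+1)))
          * (((1 : PowerSeries (ZMod 4)) - X ^ (2*n+1)) * G (2*n+1))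
          * (1 + 2 * ∑ j ∈ range n, X ^ (2*j+1) * G (2*j+1)) := by ring
      _ = _ := by rw [one_sub_X_pow_mul_G (by omega : 0 < 2*n+1), mul_one, ← hP]
  have hPmap : φ4 (∏ j ∈ range n, (1 + (X : PowerSeries ℤ) ^ (2 * j + 1)))
      = ∏ j ∈ range n, (1 + (X : PowerSeries (ZMod 4)) ^ (2*j+1)) := by
    rw [map_prod]
    refine Finset.prod_congr rfl fun j _ => ?_
    rw [map_add, map_one, map_pow, φ4, PowerSeries.map_X]
  rw [mockBterm, map_mul, map_mul, map_pow, φ4, PowerSeries.map_X, ← φ4, hPmap, ← hDV]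
  calc X ^ n * (φ4 Dz * V) * φ4 (PowerSeries.invOfUnit Dz 1)
      = X ^ n * V * (φ4 Dz * φ4 (PowerSeries.invOfUnit Dz 1)) := by ring
    _ = X ^ n * V := by rw [hmapinv, mul_one]

def c1 (N : ℕ) : ℕ := #((range (N+1)).filter fun n => (2*n+1) ∣ (N - n))

def inCard (N n j : ℕ) : ℕ :=
  #((range (N - n - (2*j+1) + 1)).filter fun x => (2*n+1) ∣ x ∧ (2*j+1) ∣ (N - n - (2*j+1) - x))

def c2 (N : ℕ) : ℕ :=
  ∑ n ∈ range (N+1), ∑ j ∈ range n, if 2*j+1 ≤ N - n then inCard N n j else 0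

lemma coeff_G_mul_G (L u s : ℕ) :
    coeff L (G u * G s)
      = (#((range (L+1)).filter fun x => u ∣ x ∧ s ∣ (L - x)) : ZMod 4) := by
  rw [coeff_mul, Finset.Nat.sum_antidiagonal_eq_sum_range_succ_mk, ← Finset.sum_boole]
  refine Finset.sum_congr rfl fun k _ => ?_
  simp only [G, coeff_mk]
  split_ifs <;> simp_all

lemma coeff_V (n K : ℕ) :
    coeff K (G (2*n+1) * (1 + 2 * ∑ j ∈ range n, X ^ (2*j+1) * G (2*j+1)))
      = (if (2*n+1) ∣ K then 1 else 0)
        + 2 * ∑ j ∈ range n, (if 2*j+1 ≤ K then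
            (#((range (K - (2*j+1) + 1)).filter fun x => (2*n+1) ∣ x ∧ (2*j+1) ∣ (K - (2*j+1) - x)) : ZMod 4)
          else 0) := by
  have expand : G (2*n+1) * (1 + 2 * ∑ j ∈ range n, X ^ (2*j+1) * G (2*j+1))
      = G (2*n+1) + C (R := ZMod 4) 2 * ∑ j ∈ range n, (G (2*n+1) * G (2*j+1)) * X ^ (2*j+1) := by
    rw [map_ofNat (C (R := ZMod 4)) 2]
    simp only [mul_add, mul_one, Finset.mul_sum]
    congr 1
    exact Finset.sum_congr rfl fun j _ => by ring
  rw [expand, map_add, coeff_C_mul, map_sum]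
  congr 1
  · simp [G, coeff_mk]
  · have h2 : ((2 : ZMod 4)) = ((2:ZMod 4)) := rfl
    refine congrArg (fun z => 2 * z) (Finset.sum_congr rfl fun j _ => ?_)
    rw [PowerSeries.coeff_mul_X_pow']
    split_ifs with h
    · rw [coeff_G_mul_G]
    · rfl

lemma b_mod4 (N : ℕ) :
    ((b N : ℤ) : ZMod 4) = (c1 N : ZMod 4) + 2 * (c2 N : ZMod 4) := by
  have h1 : ((b N : ℤ) : ZMod 4)
      = ∑ n ∈ range (N+1), coeff N (φ4 (mockBterm n)) := by
    rw [b, mockB, coeff_mk]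
    push_cast
    refine Finset.sum_congr rfl fun n _ => ?_
    rw [φ4, PowerSeries.coeff_map]
    rfl
  rw [h1]
  have h2 : ∀ n ∈ range (N+1), coeff N (φ4 (mockBterm n))
      = (if (2*n+1) ∣ (N - n) then 1 else 0)
        + 2 * ∑ j ∈ range n, (if 2*j+1 ≤ N - n then ((inCard N n j : ZMod 4)) else 0) := by
    intro n hn
    have hn' : n ≤ N := by simpa using Nat.lt_succ_iff.mp (Finset.mem_range.mp hn)
    rw [map_mockBterm]
    have hrw : N = (N - n) + n := by omega
    rw [hrw, PowerSeries.coeff_X_pow_mul, coeff_V]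
    simp only [show N - n + n = N from by omega, inCard]
  rw [Finset.sum_congr rfl h2, Finset.sum_add_distrib]
  congr 1
  · rw [Finset.sum_boole, c1]
  · rw [← Finset.mul_sum]
    congr 1
    rw [c2]
    push_cast [apply_ite (Nat.cast : ℕ → ZMod 4)]
    rfl

lemma odd_of_dvd_odd4x {d M : ℕ} (hM : Odd M) (h : d ∣ M) : Odd d := by
  rcases h with ⟨e, rfl⟩
  rcases Nat.even_or_odd d with he | ho
  · exfalso; exact (Nat.not_odd_iff_even.mpr (he.mul_right e)) hM
  · exact ho

lemma c1_eq (N : ℕ) : c1 N = (2*N+1).divisors.card := by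
  apply Finset.card_nbij' (i := fun n => 2*n+1) (j := fun d => (d-1)/2)
  · intro n hn
    simp only [Finset.mem_coe] at hn ⊢
    simp only [mem_filter, mem_range] at hn
    obtain ⟨hn1, hn2⟩ := hn
    have hn' : n ≤ N := by omega
    rw [Nat.mem_divisors]
    refine ⟨?_, by omega⟩
    have : (2*n+1) ∣ 2*(N-n) := Dvd.dvd.mul_left hn2 2
    have h2 : 2*N+1 = 2*(N-n) + (2*n+1) := by omega
    rw [h2]; exact Nat.dvd_add this dvd_rfl
  · intro d hd
    simp only [Finset.mem_coe] at hd ⊢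
    rw [Nat.mem_divisors] at hd
    obtain ⟨hdvd, _⟩ := hd
    have hodd : Odd d := odd_of_dvd_odd4x ⟨N, by omega⟩ hdvd
    obtain ⟨k, rfl⟩ := hodd
    have hk : (2*k+1-1)/2 = k := by omega
    rw [hk]
    simp only [mem_filter, mem_range]
    have hle : 2*k+1 ≤ 2*N+1 := Nat.le_of_dvd (by omega) hdvd
    refine ⟨by omega, ?_⟩
    have h2 : (2*k+1) ∣ 2*(N-k) := by
      have : 2*(N-k) = (2*N+1) - (2*k+1) := by omega
      rw [this]; exact Nat.dvd_sub hdvd dvd_rfl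
    have hcop : Nat.Coprime (2*k+1) 2 :=
      Nat.coprime_two_right.mpr (odd_two_mul_add_one k)
    exact (Nat.Coprime.dvd_of_dvd_mul_left hcop h2)
  · intro n hn; dsimp only; omega
  · intro d hd
    simp only [Finset.mem_coe] at hd ⊢
    rw [Nat.mem_divisors] at hd
    have hodd : Odd d := odd_of_dvd_odd4x ⟨N, by omega⟩ hd.1
    obtain ⟨k, rfl⟩ := hodd
    omega

lemma divisors_card_split (M : ℕ) (hM : M ≠ 0) :
    M.divisors.card = (if IsSquare M then 1 else 0)
      + 2 * #(M.divisors.filter fun d => d*d < M) := by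
  classical
  have h1 := Finset.card_filter_add_card_filter_not
    (s := M.divisors) (p := fun d => d*d < M)
  have h2 := Finset.card_filter_add_card_filter_not
    (s := M.divisors.filter fun d => ¬ d*d < M) (p := fun d => d*d = M)
  -- #(filter (¬< ∧ ≠)) = #(filter <) via d ↦ M / d
  have h3 : #(((M.divisors.filter fun d => ¬ d*d < M)).filter fun d => ¬ d*d = M)
      = #(M.divisors.filter fun d => d*d < M) := by
    apply Finset.card_nbij' (i := fun d => M / d) (j := fun d => M / d)
    · intro d hd
      simp only [Finset.mem_coe, mem_filter, Nat.mem_divisors] at hd ⊢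
      obtain ⟨⟨⟨hdvd, _⟩, hge⟩, hne⟩ := hd
      have hd0 : 0 < d := Nat.pos_of_dvd_of_pos hdvd (Nat.pos_of_ne_zero hM)
      have hmul : d * (M / d) = M := Nat.mul_div_cancel' hdvd
      refine ⟨⟨Nat.div_dvd_of_dvd hdvd, hM⟩, ?_⟩
      set e := M / d with he
      have he0 : 0 < e := by
        rcases Nat.eq_zero_or_pos e with h | h
        · exfalso; rw [h, mul_zero] at hmul; exact hM hmul.symm
        · exact h
      have h7 : d * e < d * d := by omega
      have hd_gt : e < d := lt_of_mul_lt_mul_left h7 (Nat.zero_le d)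
      calc e * e < d * e := Nat.mul_lt_mul_of_lt_of_le hd_gt (le_refl e) he0
        _ = M := hmul
    · intro d hd
      simp only [Finset.mem_coe, mem_filter, Nat.mem_divisors] at hd ⊢
      obtain ⟨⟨hdvd, _⟩, hlt⟩ := hd
      have hd0 : 0 < d := Nat.pos_of_dvd_of_pos hdvd (Nat.pos_of_ne_zero hM)
      have hmul : d * (M / d) = M := Nat.mul_div_cancel' hdvd
      set e := M / d with he
      have he0 : 0 < e := by
        rcases Nat.eq_zero_or_pos e with h | h
        · exfalso; rw [h, mul_zero] at hmul; exact hM hmul.symm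
        · exact h
      have h7 : d * d < d * e := by omega
      have hd_lt : d < e := lt_of_mul_lt_mul_left h7 (Nat.zero_le d)
      have hMe : M < e * e := by
        calc M = d * e := hmul.symm
          _ < e * e := Nat.mul_lt_mul_of_lt_of_le hd_lt (le_refl e) he0
      exact ⟨⟨⟨Nat.div_dvd_of_dvd hdvd, hM⟩, by omega⟩, by omega⟩
    · intro d hd
      simp only [Finset.mem_coe, mem_filter, Nat.mem_divisors] at hd
      exact Nat.div_div_self hd.1.1.1 hM
    · intro d hd
      simp only [Finset.mem_coe, mem_filter, Nat.mem_divisors] at hd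
      exact Nat.div_div_self hd.1.1 hM
  have h4 : #(((M.divisors.filter fun d => ¬ d*d < M)).filter fun d => d*d = M)
      = (if IsSquare M then 1 else 0) := by
    split_ifs with hsq
    · obtain ⟨r, hr⟩ := hsq
      have : ((M.divisors.filter fun d => ¬ d*d < M)).filter (fun d => d*d = M) = {r} := by
        ext d
        simp only [mem_filter, Nat.mem_divisors, mem_singleton]
        constructor
        · rintro ⟨⟨_, _⟩, h⟩
          have : d * d = r * r := by omega
          exact Nat.mul_self_inj.mp this
        · rintro rfl
          have hdvd : d ∣ M := ⟨d, hr⟩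
          exact ⟨⟨⟨hdvd, hM⟩, by omega⟩, by omega⟩
      rw [this, card_singleton]
    · rw [Finset.card_eq_zero]
      ext d
      simp only [mem_filter, Nat.mem_divisors, Finset.notMem_empty, iff_false]
      rintro ⟨⟨_, _⟩, h⟩
      exact hsq ⟨d, by omega⟩
  omega

def Qset (M : ℕ) : Finset ((ℕ × ℕ) × ℕ × ℕ) :=
  ((range (M+1) ×ˢ range (M+1)) ×ˢ range (M+1) ×ˢ range (M+1)).filter fun q =>
    Odd q.1.1 ∧ Odd q.1.2 ∧ Odd q.2.1 ∧ 1 ≤ q.2.2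
      ∧ q.1.1 * q.1.2 + 2 * q.2.2 * q.2.1 = M ∧ q.2.1 < q.1.2

def invo (q : (ℕ × ℕ) × ℕ × ℕ) : (ℕ × ℕ) × ℕ × ℕ :=
  ((q.2.1, q.1.1 + 2 * q.2.2), (q.1.1, (q.1.2 - q.2.1)/2))

lemma mem_Qset {M : ℕ} {q : (ℕ × ℕ) × ℕ × ℕ} :
    q ∈ Qset M ↔ (q.1.1 ≤ M ∧ q.1.2 ≤ M ∧ q.2.1 ≤ M ∧ q.2.2 ≤ M)
      ∧ Odd q.1.1 ∧ Odd q.1.2 ∧ Odd q.2.1 ∧ 1 ≤ q.2.2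
      ∧ q.1.1 * q.1.2 + 2 * q.2.2 * q.2.1 = M ∧ q.2.1 < q.1.2 := by
  simp only [Qset, mem_filter, mem_product, mem_range, Nat.lt_succ_iff]
  tauto

lemma invo_mem {M : ℕ} {q : (ℕ × ℕ) × ℕ × ℕ} (hq : q ∈ Qset M) : invo q ∈ Qset M := by
  obtain ⟨⟨u, v⟩, s, w⟩ := q
  rw [mem_Qset] at hq ⊢
  obtain ⟨⟨hu, hv, hs, hw⟩, ⟨a, ha⟩, hvOdd, ⟨e, he⟩, hw1, heq, hsv⟩ := hq
  dsimp only at hu hv hs hw ha hvOdd he hw1 heq hsv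
  simp only [invo]
  obtain ⟨c, hc⟩ := hvOdd
  have hvt : v = s + 2 * ((v - s)/2) := by omega
  set t := (v - s)/2 with ht
  have ht1 : 1 ≤ t := by omega
  have heq' : u * v = u * s + 2 * (u * t) := by rw [hvt]; ring
  have hbound : u + 2 * w ≤ M := by nlinarith
  refine ⟨⟨by omega, hbound, by omega, by omega⟩, ⟨e, he⟩, ⟨a + w, by omega⟩, ⟨a, ha⟩,
    ht1, ?_, by omega⟩
  have : s * (u + 2*w) + 2 * t * u = u * v + 2 * w * s := by
    rw [heq']; ring
  omega

lemma invo_invo {M : ℕ} {q : (ℕ × ℕ) × ℕ × ℕ} (hq : q ∈ Qset M) : invo (invo q) = q := by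
  obtain ⟨⟨u, v⟩, s, w⟩ := q
  rw [mem_Qset] at hq
  obtain ⟨-, ⟨a, ha⟩, ⟨c, hc⟩, ⟨e, he⟩, hw1, heq, hsv⟩ := hq
  dsimp only at ha hc he hw1 heq hsv
  show ((u, s + 2*((v-s)/2)), (s, (u + 2*w - u)/2)) = ((u,v),(s,w))
  have h1 : s + 2*((v-s)/2) = v := by omega
  have h2 : (u + 2*w - u)/2 = w := by omega
  rw [h1, h2]

lemma invo_fixed {M : ℕ} {q : (ℕ × ℕ) × ℕ × ℕ} (hq : q ∈ Qset M) :
    invo q = q ↔ q.2.1 = q.1.1 ∧ q.1.2 = q.1.1 + 2 * q.2.2 := by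
  obtain ⟨⟨u, v⟩, s, w⟩ := q
  rw [mem_Qset] at hq
  obtain ⟨-, ⟨a, ha⟩, ⟨c, hc⟩, ⟨e, he⟩, hw1, heq, hsv⟩ := hq
  dsimp only at ha hc he hw1 heq hsv
  simp only [invo, Prod.mk.injEq]
  constructor
  · rintro ⟨⟨h1, h2⟩, h3, h4⟩; exact ⟨h1, h2.symm⟩
  · rintro ⟨h1, h2⟩; exact ⟨⟨h1, h2.symm⟩, h1.symm, by omega⟩

lemma card_NF_even (M : ℕ) :
    2 ∣ ((Qset M).filter fun q => ¬ invo q = q).card := by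
  classical
  set NF := (Qset M).filter (fun q => ¬ invo q = q) with hNF
  have hsum : (∑ _q ∈ NF, (1 : ZMod 2)) = 0 := by
    apply Finset.sum_involution (fun q _ => invo q)
    · intro a _; decide
    · intro a ha _
      exact (mem_filter.mp ha).2
    · intro a ha
      rw [hNF, mem_filter] at ha ⊢
      refine ⟨invo_mem ha.1, ?_⟩
      rw [invo_invo ha.1]
      intro h; exact ha.2 h.symm
    · intro a ha
      exact invo_invo (mem_filter.mp ha).1
  rw [Finset.sum_const, nsmul_eq_mul, mul_one] at hsum
  exact (ZMod.natCast_eq_zero_iff _ 2).mp hsum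

lemma card_F_eq (M : ℕ) (hM4 : M % 4 = 1) :
    ((Qset M).filter fun q => invo q = q).card
      = #(M.divisors.filter fun d => d*d < M) := by
  classical
  have hModd : M % 2 = 1 := by omega
  apply Finset.card_nbij' (i := fun q => q.1.1)
    (j := fun d => ((d, (d + M/d)/2), (d, (M/d - d)/4)))
  · intro q hq
    rw [Finset.mem_coe, mem_filter] at hq
    obtain ⟨hmem, hfix⟩ := hq
    obtain ⟨h1, h2⟩ := (invo_fixed hmem).mp hfix
    obtain ⟨⟨u, v⟩, s, w⟩ := q
    dsimp only at h1 h2 ⊢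
    rw [mem_Qset] at hmem
    obtain ⟨⟨hu, hv, hs, hw⟩, huO, hvO, hsO, hw1, heq, hsv⟩ := hmem
    dsimp only at hu hv hs hw huO hvO hsO hw1 heq hsv
    subst h1 h2
    simp only [Finset.mem_coe, mem_filter, Nat.mem_divisors]
    have hM0 : M ≠ 0 := by omega
    have hkey : s * (s + 2*w) + 2*(w*s) = M := by
      have : s * (s + 2*w) + 2 * (w * s) = s * (s+2*w) + 2*w*s := by ring
      omega
    have hfac : s * (s + 2*w + 2*w) = M := by
      have : s * (s + 2*w + 2*w) = s * (s + 2*w) + 2*(w*s) := by ring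
      omega
    refine ⟨⟨⟨s + 2*w + 2*w, hfac.symm⟩, hM0⟩, ?_⟩
    have hs1 : 1 ≤ s := hsO.pos
    nlinarith [hfac, hs1, hw1]
  · intro d hd
    simp only [Finset.mem_coe, mem_filter, Nat.mem_divisors] at hd
    obtain ⟨⟨hdvd, hM0⟩, hdd⟩ := hd
    obtain ⟨e, hde'⟩ := hdvd
    have hde : d * e = M := hde'.symm
    have hd0 : 0 < d := Nat.pos_of_dvd_of_pos ⟨e, hde'⟩ (Nat.pos_of_ne_zero hM0)
    have hMdiv : M / d = e := by
      rw [← hde]; exact Nat.mul_div_cancel_left e hd0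
    have hdodd : Odd d := odd_of_dvd_odd4x (Nat.odd_iff.mpr (by omega)) ⟨e, hde'⟩
    have heMdvd : e ∣ M := ⟨d, by rw [mul_comm]; omega⟩
    have heodd : Odd e := odd_of_dvd_odd4x (Nat.odd_iff.mpr (by omega : M % 2 = 1)) heMdvd
    have hdlt : d < e := by
      have h7 : d * d < d * e := by omega
      exact lt_of_mul_lt_mul_left h7 (Nat.zero_le d)
    have hd2 : d % 2 = 1 := Nat.odd_iff.mp hdodd
    have he2 : e % 2 = 1 := Nat.odd_iff.mp heodd
    have h3 : (d % 4) * (e % 4) % 4 = 1 := by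
      rw [← Nat.mul_mod, hde]; exact hM4
    have hd4 : d % 4 = 1 ∨ d % 4 = 3 := by omega
    have he4 : e % 4 = 1 ∨ e % 4 = 3 := by omega
    have hmod : d % 4 = e % 4 := by
      rcases hd4 with h|h <;> rcases he4 with h'|h' <;> rw [h, h'] at h3 <;> omega
    have heM : e ≤ M := Nat.le_of_dvd (Nat.pos_of_ne_zero hM0) heMdvd
    have hveq : (d + e)/2 + 2*((e - d)/4) = e := by omega
    have heqn : d * ((d+e)/2) + 2 * ((e-d)/4) * d = M := by
      calc d * ((d+e)/2) + 2 * ((e-d)/4) * d = d * ((d+e)/2 + 2*((e-d)/4)) := by ring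
        _ = d * e := by rw [hveq]
        _ = M := hde
    have hvodd : Odd ((d+e)/2) := Nat.odd_iff.mpr (by omega)
    have hmem : ((d, (d + M/d)/2), (d, (M/d - d)/4)) ∈ Qset M := by
      rw [hMdiv, mem_Qset]
      dsimp only
      exact ⟨⟨by omega, by omega, by omega, by omega⟩, hdodd, hvodd, hdodd, by omega,
        heqn, by omega⟩
    rw [Finset.mem_coe, mem_filter]
    refine ⟨hmem, ?_⟩
    rw [invo_fixed hmem]
    dsimp only
    rw [hMdiv]
    exact ⟨rfl, by omega⟩
  · intro q hq
    rw [Finset.mem_coe, mem_filter] at hq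
    obtain ⟨hmem, hfix⟩ := hq
    obtain ⟨h1, h2⟩ := (invo_fixed hmem).mp hfix
    obtain ⟨⟨u, v⟩, s, w⟩ := q
    dsimp only at h1 h2 ⊢
    rw [mem_Qset] at hmem
    obtain ⟨⟨hu, hv, hs, hw⟩, huO, hvO, hsO, hw1, heq, hsv⟩ := hmem
    dsimp only at hu hv hs hw huO hvO hsO hw1 heq hsv
    subst h1 h2
    have hfac : s * (s + 2*w + 2*w) = M := by
      have : s * (s + 2*w + 2*w) = s * (s + 2*w) + 2*w*s := by ring
      omega
    have hs0 : 0 < s := hsO.pos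
    have hMe : M / s = s + 2*w + 2*w := by
      rw [← hfac]; exact Nat.mul_div_cancel_left _ hs0
    rw [hMe]
    simp only [Prod.mk.injEq]
    obtain ⟨c, hc⟩ := hsO
    refine ⟨⟨trivial, by omega⟩, trivial, by omega⟩
  · intro d hd
    rfl

lemma qcard_modeq (M : ℕ) (hM4 : M % 4 = 1) :
    (Qset M).card ≡ #(M.divisors.filter fun d => d*d < M) [MOD 2] := by
  classical
  have hsplit := Finset.card_filter_add_card_filter_not
    (s := Qset M) (p := fun q => invo q = q)
  have h1 := card_NF_even M
  have h2 := card_F_eq M hM4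
  unfold Nat.ModEq
  omega

lemma fiber_card (N n j : ℕ) (hn : n ≤ N) :
    #((Qset (2*N+1)).filter fun q => ((q.1.2 - 1)/2, (q.2.1 - 1)/2) = (n, j))
      = if j < n ∧ 2*j+1 ≤ N - n then inCard N n j else 0 := by
  classical
  split_ifs with hcond
  · obtain ⟨hjn, hjN⟩ := hcond
    rw [inCard]
    apply Finset.card_nbij' (i := fun q => ((q.1.1 - 1)/2) * (2*n+1))
      (j := fun x => ((2*(x/(2*n+1))+1, 2*n+1), (2*j+1, (N - n - (2*j+1) - x)/(2*j+1) + 1)))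
    · -- forward membership
      intro q hq
      rw [Finset.mem_coe, mem_filter, mem_Qset, Prod.mk.injEq] at hq
      obtain ⟨⟨⟨hu, hv, hs, hw⟩, ⟨a, ha⟩, hvO, hsO, hw1, heq, hsv⟩, hn2, hj2⟩ := hq
      obtain ⟨⟨u, v⟩, s, w⟩ := q
      dsimp only at *
      obtain ⟨nn, hnn⟩ := hvO
      obtain ⟨jj, hjj⟩ := hsO
      have hv' : v = 2*n+1 := by omega
      have hs' : s = 2*j+1 := by omega
      subst hv' hs' ha
      obtain ⟨w', rfl⟩ : ∃ w', w = w' + 1 := ⟨w - 1, by omega⟩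
      have hkey : (2*a+1) * (2*n+1) + 2*(w'+1)*(2*j+1)
          = 2*(a*(2*n+1) + n + w'*(2*j+1) + (2*j+1)) + 1 := by ring
      have hN : N = a*(2*n+1) + n + w'*(2*j+1) + (2*j+1) := by omega
      have ha2 : (2*a+1-1)/2 = a := by omega
      rw [ha2, Finset.mem_coe, mem_filter, mem_range]
      refine ⟨by omega, ⟨a, by ring⟩, ?_⟩
      have : N - n - (2*j+1) - a*(2*n+1) = (2*j+1) * w' := by
        have hb : (2*j+1) * w' = w'*(2*j+1) := by ring
        omega
      rw [this]
      exact Dvd.intro w' rfl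
    · -- backward membership
      intro x hx
      rw [Finset.mem_coe, mem_filter, mem_range] at hx
      obtain ⟨hxL, ⟨a, hxa⟩, ⟨c, hc⟩⟩ := hx
      have hxdiv : x / (2*n+1) = a := by
        rw [hxa]; exact Nat.mul_div_cancel_left a (by omega)
      simp only [Finset.mem_coe]
      rw [mem_filter, mem_Qset, Prod.mk.injEq]
      have hLc : N - n - (2*j+1) - x = (2*j+1)*c := hc
      have hwdiv : (N - n - (2*j+1) - x)/(2*j+1) = c := by
        rw [hLc]; exact Nat.mul_div_cancel_left c (by omega)
      rw [hxdiv, hwdiv]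
      dsimp only
      have hkey : (2*a+1) * (2*n+1) + 2*(c+1)*(2*j+1)
          = 2*((2*n+1)*a + (2*j+1)*c + n + (2*j+1)) + 1 := by ring
      have heq : (2*a+1) * (2*n+1) + 2*(c+1)*(2*j+1) = 2*N+1 := by omega
      have haN : a ≤ N := by
        have : a ≤ (2*n+1) * a := Nat.le_mul_of_pos_left a (by omega)
        omega
      have hcN : c ≤ N := by
        have : c ≤ (2*j+1) * c := Nat.le_mul_of_pos_left c (by omega)
        omega
      exact ⟨⟨⟨by omega, by omega, by omega, by omega⟩, ⟨a, by omega⟩, ⟨n, by omega⟩,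
        ⟨j, by omega⟩, by omega, heq, by omega⟩, by omega, by omega⟩
    · -- left inverse
      intro q hq
      rw [Finset.mem_coe, mem_filter, mem_Qset, Prod.mk.injEq] at hq
      obtain ⟨⟨⟨hu, hv, hs, hw⟩, ⟨a, ha⟩, hvO, hsO, hw1, heq, hsv⟩, hn2, hj2⟩ := hq
      obtain ⟨⟨u, v⟩, s, w⟩ := q
      dsimp only at *
      obtain ⟨nn, hnn⟩ := hvO
      obtain ⟨jj, hjj⟩ := hsO
      have hv' : v = 2*n+1 := by omega
      have hs' : s = 2*j+1 := by omega
      subst hv' hs' ha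
      obtain ⟨w', rfl⟩ : ∃ w', w = w' + 1 := ⟨w - 1, by omega⟩
      have hkey : (2*a+1) * (2*n+1) + 2*(w'+1)*(2*j+1)
          = 2*(a*(2*n+1) + n + w'*(2*j+1) + (2*j+1)) + 1 := by ring
      have hN : N = a*(2*n+1) + n + w'*(2*j+1) + (2*j+1) := by omega
      have ha2 : (2*a+1-1)/2 = a := by omega
      rw [ha2]
      have hxdiv : a * (2*n+1) / (2*n+1) = a := Nat.mul_div_cancel a (by omega)
      rw [hxdiv]
      have hL : N - n - (2*j+1) - a*(2*n+1) = (2*j+1) * w' := by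
        have hb : (2*j+1) * w' = w'*(2*j+1) := by ring
        omega
      rw [hL]
      have hwdiv : (2*j+1) * w' / (2*j+1) = w' := Nat.mul_div_cancel_left w' (by omega)
      rw [hwdiv]
    · -- right inverse
      intro x hx
      rw [Finset.mem_coe, mem_filter, mem_range] at hx
      obtain ⟨hxL, ⟨a, hxa⟩, ⟨c, hc⟩⟩ := hx
      have hxdiv : x / (2*n+1) = a := by
        rw [hxa]; exact Nat.mul_div_cancel_left a (by omega)
      dsimp only
      rw [hxdiv]
      have : (2*(a)+1-1)/2 = a := by omega
      rw [this, hxa]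
      exact mul_comm a (2*n+1)
  · rw [Finset.card_eq_zero]
    apply Finset.eq_empty_of_forall_notMem
    intro q hq
    rw [mem_filter, mem_Qset, Prod.mk.injEq] at hq
    obtain ⟨⟨⟨hu, hv, hs, hw⟩, ⟨a, ha⟩, hvO, hsO, hw1, heq, hsv⟩, hn2, hj2⟩ := hq
    obtain ⟨⟨u, v⟩, s, w⟩ := q
    dsimp only at *
    obtain ⟨nn, hnn⟩ := hvO
    obtain ⟨jj, hjj⟩ := hsO
    have hv' : v = 2*n+1 := by omega
    have hs' : s = 2*j+1 := by omega
    subst hv' hs' ha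
    obtain ⟨w', rfl⟩ : ∃ w', w = w' + 1 := ⟨w - 1, by omega⟩
    have hkey : (2*a+1) * (2*n+1) + 2*(w'+1)*(2*j+1)
        = 2*(a*(2*n+1) + n + w'*(2*j+1) + (2*j+1)) + 1 := by ring
    exact hcond ⟨by omega, by omega⟩

lemma c2_eq (N : ℕ) : c2 N = (Qset (2*N+1)).card := by
  classical
  rw [eq_comm]
  rw [Finset.card_eq_sum_card_fiberwise
    (f := fun q => ((q.1.2 - 1)/2, (q.2.1 - 1)/2))
    (t := range (N+1) ×ˢ range (N+1))
    (by
      intro q hq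
      rw [Finset.mem_coe, mem_Qset] at hq
      obtain ⟨⟨hu, hv, hs, hw⟩, -, -, -, -, -, -⟩ := hq
      rw [Finset.mem_coe, mem_product, mem_range, mem_range]
      dsimp only
      exact ⟨by omega, by omega⟩)]
  rw [Finset.sum_product, c2]
  refine Finset.sum_congr rfl fun n hn => ?_
  rw [mem_range] at hn
  have hnN : n ≤ N := by omega
  rw [← Finset.sum_subset (Finset.range_subset_range.mpr (by omega : n ≤ N + 1))]
  · refine Finset.sum_congr rfl fun j hj => ?_
    rw [mem_range] at hj
    rw [fiber_card N n j hnN]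
    by_cases h2 : 2*j+1 ≤ N - n
    · rw [if_pos ⟨hj, h2⟩, if_pos h2]
    · rw [if_neg (fun hh => h2 hh.2), if_neg h2]
  · intro j hj hj2
    rw [mem_range] at hj hj2
    rw [fiber_card N n j hnN, if_neg]
    intro h
    exact hj2 h.1

lemma key (n : ℕ) : ((b (2*n) : ℤ) : ZMod 4) = if IsSquare (4*n+1) then 1 else 0 := by
  have hb := b_mod4 (2*n)
  have hc1 := c1_eq (2*n)
  have hc2 := c2_eq (2*n)
  have hsplit := divisors_card_split (2*(2*n)+1) (by omega)
  have hmq := qcard_modeq (2*(2*n)+1) (by omega)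
  have h2 : c2 (2*n) % 2 = #((2*(2*n)+1).divisors.filter fun d => d*d < (2*(2*n)+1)) % 2 := by
    rw [hc2]; exact hmq
  have hmod : (c1 (2*n) + 2 * c2 (2*n)) % 4
      = (if IsSquare (2*(2*n)+1) then 1 else 0) % 4 := by
    rw [hc1, hsplit]
    omega
  have hfin : ((c1 (2*n) + 2 * c2 (2*n) : ℕ) : ZMod 4)
      = ((if IsSquare (2*(2*n)+1) then 1 else 0 : ℕ) : ZMod 4) :=
    (ZMod.natCast_eq_natCast_iff _ _ _).mpr hmod
  rw [hb]
  calc (c1 (2*n) : ZMod 4) + 2 * (c2 (2*n) : ZMod 4)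
      = ((c1 (2*n) + 2*c2 (2*n) : ℕ) : ZMod 4) := by push_cast; ring
    _ = ((if IsSquare (2*(2*n)+1) then 1 else 0 : ℕ) : ZMod 4) := hfin
    _ = if IsSquare (4*n+1) then 1 else 0 := by
        rw [show 2*(2*n)+1 = 4*n+1 from by ring]
        split_ifs <;> simp

-- remaining pieces to develop: unit lemma, E mod 8, IsSquare transfer, final assembly
lemma pow_sq_mod8 (p k : ℕ) (hp : p % 2 = 1) : p^(2*k+2) % 8 = 1 := by
  have h2 : p^2 % 8 = 1 := by
    obtain ⟨t, rfl⟩ : ∃ t, p = 2*t+1 := ⟨p/2, by omega⟩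
    have h : (2*t+1)^2 = 4*(t*(t+1)) + 1 := by ring
    obtain ⟨m, hm⟩ := Nat.even_mul_succ_self t
    rw [h]; omega
  have hexp : 2*k+2 = 2*(k+1) := by omega
  have hpow : p^(2*k+2) = (p^2)^(k+1) := by rw [hexp, pow_mul]
  rw [hpow, Nat.pow_mod, h2, one_pow]
  omega

lemma unit_one (p k : ℕ) (hp : p % 2 = 1) :
    ((-1 : ZMod 4)^((k+1)*(p-1)/2) * (p : ZMod 4)^(k+1)) = 1 := by
  have hcast : (p : ZMod 4) = ((p % 4 : ℕ) : ZMod 4) := (ZMod.natCast_mod p 4).symm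
  have hp4 : p % 4 = 1 ∨ p % 4 = 3 := by omega
  rcases hp4 with h | h
  · obtain ⟨t, ht⟩ : ∃ t, p - 1 = 4*t := ⟨(p-1)/4, by omega⟩
    have hbr : (k+1)*(4*t) = 2*(2*(t*(k+1))) := by ring
    have hbr2 : (k+1)*(p-1) = (k+1)*(4*t) := by rw [ht]
    have he : (k+1)*(p-1)/2 = 2*(t*(k+1)) := by omega
    have heven : Even ((k+1)*(p-1)/2) := ⟨t*(k+1), by omega⟩
    rw [heven.neg_one_pow, hcast, h]
    norm_num
  · obtain ⟨t, ht⟩ : ∃ t, p - 1 = 4*t+2 := ⟨(p-3)/4, by omega⟩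
    have hbr : (k+1)*(4*t+2) = 2*((k+1)*(2*t+1)) := by ring
    have hbr2 : (k+1)*(p-1) = (k+1)*(4*t+2) := by rw [ht]
    have he : (k+1)*(p-1)/2 = (k+1)*(2*t+1) := by omega
    have hpm : ((p:ZMod 4)) = -1 := by
      rw [hcast, h]; decide
    rw [hpm, ← pow_add]
    have heven : Even ((k+1)*(p-1)/2 + (k+1)) := by
      refine ⟨(k+1)*(t+1), ?_⟩
      have : (k+1)*(2*t+1) + (k+1) = (k+1)*(t+1) + (k+1)*(t+1) := by ring
      omega
    exact heven.neg_one_pow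

lemma isSquare_mul_pow_sq {p k M : ℕ} (hp : 0 < p) :
    IsSquare (p^(2*k+2) * M) ↔ IsSquare M := by
  have h1 : (p^(k+1))^2 = p^(2*k+2) := by rw [← pow_mul]; congr 1; omega
  constructor
  · rintro ⟨y, hy⟩
    have hq : (p^(k+1))^2 ∣ y^2 := by
      refine ⟨M, ?_⟩
      rw [h1, sq, ← hy]
    have hdvd : p^(k+1) ∣ y := (Nat.pow_dvd_pow_iff (two_ne_zero)).mp hq
    obtain ⟨z, rfl⟩ := hdvd
    refine ⟨z, ?_⟩
    have hpk : 0 < p^(2*k+2) := Nat.pow_pos hp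
    apply Nat.eq_of_mul_eq_mul_left hpk
    rw [hy, ← h1]
    ring
  · rintro ⟨r, rfl⟩
    exact ⟨p^(k+1) * r, by rw [← h1]; ring⟩

/-- Let `p` be an odd prime. Then for all `n, k ≥ 0`,
`b(2·p^{2k+2}·n + (p^{2k+2} − 1)/2) ≡ (−1)^{(k+1)(p−1)/2} · p^{k+1} · b(2n) (mod 4)`. -/
theorem b_two_iteration (p : ℕ) [Fact p.Prime] (hodd : Odd p) :
    ∀ n k : ℕ,
      b (2 * p ^ (2 * k + 2) * n + (p ^ (2 * k + 2) - 1) / 2)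
        ≡ (-1 : ℤ) ^ ((k + 1) * (p - 1) / 2) * (p : ℤ) ^ (k + 1) * b (2 * n) [ZMOD 4] := by
  intro n k
  have hp2 : p % 2 = 1 := Nat.odd_iff.mp hodd
  have hp0 : 0 < p := by omega
  have hE8 : p^(2*k+2) % 8 = 1 := pow_sq_mod8 p k hp2
  set E := p^(2*k+2) with hE
  set n' := E*n + (E-1)/4 with hn'
  have hbrE : 2 * E * n = 2 * (E * n) := by ring
  have hA : 2 * E * n + (E - 1)/2 = 2 * n' := by omega
  have h4n' : 4*n'+1 = E * (4*n+1) := by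
    have hb2 : E * (4*n+1) = 4*(E*n) + E := by ring
    omega
  suffices h : ((b (2 * E * n + (E - 1) / 2) : ℤ) : ZMod 4)
      = (((-1 : ℤ) ^ ((k + 1) * (p - 1) / 2) * (p : ℤ) ^ (k + 1) * b (2 * n) : ℤ) : ZMod 4) by
    exact_mod_cast (ZMod.intCast_eq_intCast_iff _ _ _).mp h
  rw [hA]
  push_cast
  calc ((b (2*n') : ℤ) : ZMod 4)
      = if IsSquare (4*n'+1) then 1 else 0 := key n'
    _ = if IsSquare (4*n+1) then 1 else 0 := by
        rw [h4n', hE]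
        exact if_congr (isSquare_mul_pow_sq hp0) rfl rfl
    _ = ((b (2*n) : ℤ) : ZMod 4) := (key n).symm
    _ = (-1 : ZMod 4) ^ ((k + 1) * (p - 1) / 2) * (p : ZMod 4) ^ (k + 1)
          * ((b (2*n) : ℤ) : ZMod 4) := by
        rw [unit_one p k hp2, one_mul]
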